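/- For a space X, the following are equivalent: (1) X satisfies S1(C_Τ, C_Τ); (2) for every continuous function Ψ : X → 2^(ℕ×ℕ), if the image Ψ[X] is a τ-family, then Ψ[X] is τ-diagonalizable. -/

import Mathlib

open Set Filter Cardinal
open scoped Classical

noncomputable section

/-- The Cantor space `2^ℕ`. -/
abbrev Cantor := ℕ → Bool

/-- Arrays: elements of `2^(ℕ×ℕ)`. -/
abbrev Arr := ℕ × ℕ → Bool

/-- A γ-array: every row is eventually 1. -/
def IsGammaArray (A : Arr) : Prop := ∀ n, ∀ᶠ m in atTop, A (n, m) = true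

/-- A γ-family: a set of γ-arrays. -/
def GammaFamily (𝒜 : Set Arr) : Prop := ∀ A ∈ 𝒜, IsGammaArray A

/-- A family of arrays is finitely τ-diagonalizable. -/
def FinTauDiag (𝒜 : Set Arr) : Prop :=
  ∃ F : ℕ → Finset ℕ,
    (∀ A ∈ 𝒜, ∃ᶠ n in atTop, ∃ m ∈ F n, A (n, m) = true) ∧
    (∀ A ∈ 𝒜, ∀ B ∈ 𝒜,
      (∀ᶠ n in atTop, ∀ m ∈ F n, A (n, m) ≤ B (n, m)) ∨
      (∀ᶠ n in atTop, ∀ m ∈ F n, B (n, m) ≤ A (n, m)))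

/-- A family of arrays is semi τ-diagonalizable (via a partial function with domain `D`). -/
def SemiTauDiag (𝒜 : Set Arr) : Prop :=
  ∃ (D : Set ℕ) (g : ℕ → ℕ),
    (∀ A ∈ 𝒜, ∃ᶠ n in atTop, n ∈ D ∧ A (n, g n) = true) ∧
    (∀ A ∈ 𝒜, ∀ B ∈ 𝒜,
      (∀ᶠ n in atTop, n ∈ D → A (n, g n) ≤ B (n, g n)) ∨
      (∀ᶠ n in atTop, n ∈ D → B (n, g n) ≤ A (n, g n)))

/-- A τ-family of arrays. -/
def TauFamily (𝒜 : Set Arr) : Prop :=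
  (∀ A ∈ 𝒜, ∀ n, ∃ᶠ m in atTop, A (n, m) = true) ∧
  (∀ A ∈ 𝒜, ∀ B ∈ 𝒜, ∀ n,
    (∀ᶠ m in atTop, A (n, m) ≤ B (n, m)) ∨
    (∀ᶠ m in atTop, B (n, m) ≤ A (n, m)))

/-- A family of arrays is τ-diagonalizable. -/
def TauDiag (𝒜 : Set Arr) : Prop :=
  ∃ g : ℕ → ℕ,
    (∀ A ∈ 𝒜, ∃ᶠ n in atTop, A (n, g n) = true) ∧
    (∀ A ∈ 𝒜, ∀ B ∈ 𝒜,
      (∀ᶠ n in atTop, A (n, g n) ≤ B (n, g n)) ∨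
      (∀ᶠ n in atTop, B (n, g n) ≤ A (n, g n)))

/-- A family of arrays is o-diagonalizable. -/
def ODiag (𝒜 : Set Arr) : Prop :=
  ∃ g : ℕ → ℕ, ∀ A ∈ 𝒜, ∃ n, A (n, g n) = true

/-- An ω-family of arrays: rows frequently 1 and, for each `n`,
the family of the `n`-th rows is centered. -/
def OmegaFamily (𝒜 : Set Arr) : Prop :=
  (∀ A ∈ 𝒜, ∀ n, ∃ᶠ m in atTop, A (n, m) = true) ∧
  (∀ n, ∀ 𝒜' ⊆ 𝒜, 𝒜'.Finite → {m | ∀ A ∈ 𝒜', A (n, m) = true}.Infinite)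

/-- The bounding number 𝔟. -/
def bNum : Cardinal :=
  sInf {c | ∃ F : Set (ℕ → ℕ), Cardinal.mk F = c ∧
    ¬ ∃ g : ℕ → ℕ, ∀ f ∈ F, ∀ᶠ n in atTop, f n ≤ g n}

/-- The splitting number 𝔰. -/
def sNum : Cardinal :=
  sInf {c | ∃ S : Set (Set ℕ), Cardinal.mk S = c ∧ (∀ s ∈ S, s.Infinite) ∧
    ∀ a : Set ℕ, a.Infinite → ∃ s ∈ S, (a ∩ s).Infinite ∧ (a \ s).Infinite}

/-- The tower number 𝔱. -/
def tNum : Cardinal :=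
  sInf {c | ∃ T : Set (Set ℕ), Cardinal.mk T = c ∧ (∀ t ∈ T, t.Infinite) ∧
    (∀ a ∈ T, ∀ b ∈ T, (a \ b).Finite ∨ (b \ a).Finite) ∧
    ¬ ∃ a : Set ℕ, a.Infinite ∧ ∀ t ∈ T, (a \ t).Finite}

/-- cov(M): the least number of meager sets covering the Baire space. -/
def covM : Cardinal :=
  sInf {c | ∃ 𝒞 : Set (Set (ℕ → ℕ)), Cardinal.mk 𝒞 = c ∧
    (∀ M ∈ 𝒞, IsMeagre M) ∧ ⋃₀ 𝒞 = Set.univ}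

/-- The o-diagonalization number: the minimal cardinality of a τ-family
which is not o-diagonalizable. -/
def odNum : Cardinal :=
  sInf {c | ∃ 𝒜 : Set Arr, Cardinal.mk 𝒜 = c ∧ TauFamily 𝒜 ∧ ¬ ODiag 𝒜}

section Covers

variable (α : Type*)

/-- A countable cover of the space `α`. -/
def CountCover (𝒰 : Set (Set α)) : Prop :=
  𝒰.Countable ∧ ⋃₀ 𝒰 = Set.univ ∧ Set.univ ∉ 𝒰

/-- A (countable) γ-cover. -/
def GammaCover (𝒰 : Set (Set α)) : Prop :=
  CountCover α 𝒰 ∧ 𝒰.Infinite ∧ ∀ x : α, {U | U ∈ 𝒰 ∧ x ∉ U}.Finite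

/-- A (countable) τ-cover. -/
def TauCover (𝒰 : Set (Set α)) : Prop :=
  CountCover α 𝒰 ∧ (∀ x : α, {U | U ∈ 𝒰 ∧ x ∈ U}.Infinite) ∧
  ∀ x y : α, {U | U ∈ 𝒰 ∧ x ∈ U ∧ y ∉ U}.Finite ∨ {U | U ∈ 𝒰 ∧ y ∈ U ∧ x ∉ U}.Finite

/-- A (countable) ω-cover. -/
def OmegaCover (𝒰 : Set (Set α)) : Prop :=
  CountCover α 𝒰 ∧ ∀ F : Set α, F.Finite → ∃ U ∈ 𝒰, F ⊆ U

variable [TopologicalSpace α]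

/-- All members are open. -/
def OpenFam (𝒰 : Set (Set α)) : Prop := ∀ U ∈ 𝒰, IsOpen U

/-- All members are clopen. -/
def ClopenFam (𝒰 : Set (Set α)) : Prop := ∀ U ∈ 𝒰, IsClopen U

/-- The class O of countable open covers. -/
def OCov (𝒰 : Set (Set α)) : Prop := CountCover α 𝒰 ∧ OpenFam α 𝒰
/-- The class Γ of countable open γ-covers. -/
def OGamma (𝒰 : Set (Set α)) : Prop := GammaCover α 𝒰 ∧ OpenFam α 𝒰
/-- The class Τ of countable open τ-covers. -/
def OTau (𝒰 : Set (Set α)) : Prop := TauCover α 𝒰 ∧ OpenFam α 𝒰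
/-- The class Ω of countable open ω-covers. -/
def OOmega (𝒰 : Set (Set α)) : Prop := OmegaCover α 𝒰 ∧ OpenFam α 𝒰

/-- The class C of countable clopen covers. -/
def KCov (𝒰 : Set (Set α)) : Prop := CountCover α 𝒰 ∧ ClopenFam α 𝒰
/-- The class C_Γ of countable clopen γ-covers. -/
def KGamma (𝒰 : Set (Set α)) : Prop := GammaCover α 𝒰 ∧ ClopenFam α 𝒰
/-- The class C_Τ of countable clopen τ-covers. -/
def KTau (𝒰 : Set (Set α)) : Prop := TauCover α 𝒰 ∧ ClopenFam α 𝒰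

end Covers

/-- The selection principle S1(𝒜,ℬ). -/
def S1 (α : Type*) (𝒜 ℬ : Set (Set α) → Prop) : Prop :=
  ∀ U : ℕ → Set (Set α), (∀ n, 𝒜 (U n)) →
    ∃ V : ℕ → Set α, (∀ n, V n ∈ U n) ∧ ℬ (range V)

/-- The selection principle Sfin(𝒜,ℬ). -/
def SFin (α : Type*) (𝒜 ℬ : Set (Set α) → Prop) : Prop :=
  ∀ U : ℕ → Set (Set α), (∀ n, 𝒜 (U n)) →
    ∃ F : ℕ → Set (Set α), (∀ n, (F n).Finite ∧ F n ⊆ U n) ∧ ℬ (⋃ n, F n)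

/-- The selection principle Ufin(𝒜,ℬ). -/
def UFin (α : Type*) (𝒜 ℬ : Set (Set α) → Prop) : Prop :=
  ∀ U : ℕ → Set (Set α), (∀ n, 𝒜 (U n)) →
    (∀ n, ¬ ∃ F : Set (Set α), F ⊆ U n ∧ F.Finite ∧ ⋃₀ F = Set.univ) →
    ∃ F : ℕ → Set (Set α), (∀ n, (F n).Finite ∧ F n ⊆ U n) ∧
      ℬ (range fun n => ⋃₀ F n)

/-- The critical cardinality non(P) of a property `P` of sets of reals:
the minimal cardinality of an infinite subset of the Cantor space not satisfying `P`. -/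
def nonP (P : Set Cantor → Prop) : Cardinal :=
  sInf {c | ∃ X : Set Cantor, X.Infinite ∧ ¬ P X ∧ Cardinal.mk X = c}

/-- The collection of cardinalities of witnessing families of `f`-sequences for `θ_f`. -/
def ThetaSet (f : ℕ → ℕ) : Set Cardinal :=
  {c | ∃ ℱ : Set (ℕ → Set ℕ), Cardinal.mk ℱ = c ∧
    (∀ σ ∈ ℱ, ∀ n, σ n ⊆ Iio (f n)) ∧
    (∀ σ ∈ ℱ, ∀ᶠ n in atTop, (σ n).Nonempty) ∧
    (∀ σ ∈ ℱ, ∀ η ∈ ℱ, (∀ᶠ n in atTop, σ n ⊆ η n) ∨ (∀ᶠ n in atTop, η n ⊆ σ n)) ∧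
    ¬ ∃ g : ℕ → ℕ, ∀ σ ∈ ℱ, ∃ n, g n ∈ σ n}

/-- The cardinal θ_f; equal to 𝔠⁺ if no witnessing family exists. -/
def theta (f : ℕ → ℕ) : Cardinal :=
  if (ThetaSet f).Nonempty then sInf (ThetaSet f) else Order.succ Cardinal.continuum

/-- θ* = min over f (with all values ≥ 2) of θ_f. -/
def thetaStar : Cardinal :=
  sInf {c | ∃ f : ℕ → ℕ, (∀ n, 2 ≤ f n) ∧ theta f = c}

/-- The collection of cardinalities of witnessing families for `𝔈_f`. -/
def ESet (f : ℕ → ℕ) : Set Cardinal :=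
  {c | ∃ F : Set (ℕ → ℕ), Cardinal.mk F = c ∧ (∀ h ∈ F, ∀ n, h n < f n) ∧
    ∀ g : ℕ → ℕ, ∃ h ∈ F, ∀ n, h n ≠ g n}

/-- The cardinal 𝔈_f; equal to 𝔠⁺ if no witnessing family exists. -/
def ENum (f : ℕ → ℕ) : Cardinal :=
  if (ESet f).Nonempty then sInf (ESet f) else Order.succ Cardinal.continuum

/-- 𝔈* = min over f (with all values ≥ 1) of 𝔈_f. -/
def EStar : Cardinal :=
  sInf {c | ∃ f : ℕ → ℕ, (∀ n, 1 ≤ f n) ∧ ENum f = c}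



section Stmt7Aux

private lemma freq_iff_inf {p : ℕ → Prop} :
    (∃ᶠ n in atTop, p n) ↔ {n | p n}.Infinite :=
  Nat.frequently_atTop_iff_infinite

private lemma ev_iff_fin {p : ℕ → Prop} :
    (∀ᶠ n in atTop, p n) ↔ {n | ¬ p n}.Finite := by
  rw [← Nat.cofinite_eq_atTop, Filter.eventually_cofinite]

private lemma bool_not_le {a b : Bool} : ¬ (a ≤ b) ↔ (a = true ∧ b = false) := by
  revert a b; decide

private lemma ite_bool_iff {P : Prop} [Decidable P] :
    (if P then true else false) = true ↔ P := by
  by_cases h : P <;> simp [h]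

private lemma indicator_cont {α : Type*} [TopologicalSpace α] {U : Set α} (h : IsClopen U) :
    Continuous fun x => if x ∈ U then true else false := by
  have hlc : IsLocallyConstant (fun x => if x ∈ U then true else false) := by
    intro s
    have : (fun x => if x ∈ U then true else false) ⁻¹' s =
        ((if true ∈ s then U else ∅) ∪ (if false ∈ s then Uᶜ else ∅)) := by
      ext x
      by_cases hx : x ∈ U <;> by_cases ht : true ∈ s <;> by_cases hf : false ∈ s <;>
        simp [Set.mem_preimage, hx, ht, hf]
    rw [this]
    apply IsOpen.union <;> split
    · exact h.isOpen
    · exact isOpen_empty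
    · exact h.compl.isOpen
    · exact isOpen_empty
  exact hlc.continuous

private lemma image_inf_of_fib_fin {β : Type*} {f : ℕ → β} {S : Set ℕ}
    (hS : S.Infinite) (hfib : ∀ m ∈ S, {m' | f m' = f m}.Finite) : (f '' S).Infinite := by
  intro hfin
  apply hS
  have hsub : S ⊆ ⋃ b ∈ f '' S, {m' | f m' = b} := fun m hm => by
    exact Set.mem_biUnion ⟨m, hm, rfl⟩ rfl
  refine (Set.Finite.biUnion hfin ?_).subset hsub
  rintro b ⟨m, hm, rfl⟩
  exact hfib m hm

private lemma exists_markers (X : Set Cantor) (hX : X.Infinite) :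
    ∃ D : ℕ → Set ↥X, (∀ k, IsClopen (D k)) ∧ (∀ k, (D k).Nonempty) ∧
      ∀ k l, k ≠ l → D k ∩ D l = ∅ := by
  classical
  have clopen_coord : ∀ (i : ℕ) (c : Bool), IsClopen {w : Cantor | w i = c} := fun i c =>
    (isClopen_discrete {c}).preimage (continuous_apply i)
  have key : ∀ S : Set Cantor, S.Infinite →
      ∃ C : Set Cantor, IsClopen C ∧ (S ∩ C).Infinite ∧ (S \ C).Nonempty := by
    intro S hS
    obtain ⟨a, ha, b, hb, hab⟩ := hS.nontrivial
    obtain ⟨i, hi⟩ := Function.ne_iff.mp hab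
    by_cases h : (S ∩ {w | w i = a i}).Infinite
    · exact ⟨{w | w i = a i}, clopen_coord i (a i), h,
        ⟨b, hb, fun hbm => hi (show b i = a i by simpa using hbm).symm⟩⟩
    · refine ⟨{w | w i = a i}ᶜ, (clopen_coord i (a i)).compl, ?_, ⟨a, ha, by simp⟩⟩
      have h1 : (S \ (S ∩ {w | w i = a i})).Infinite := hS.diff (Set.not_infinite.mp h)
      refine h1.mono fun x hx => ⟨hx.1, fun hc => hx.2 ⟨hx.1, hc⟩⟩
  let T : ℕ → {S : Set Cantor // S.Infinite} := fun k => Nat.rec ⟨X, hX⟩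
    (fun _ p => ⟨p.1 ∩ (key p.1 p.2).choose, (key p.1 p.2).choose_spec.2.1⟩) k
  let C : ℕ → Set Cantor := fun k => (key (T k).1 (T k).2).choose
  have hCclopen : ∀ k, IsClopen (C k) := fun k => (key (T k).1 (T k).2).choose_spec.1
  have hTsucc : ∀ k, (T (k + 1)).1 = (T k).1 ∩ C k := fun k => rfl
  have hTX : ∀ k, (T k).1 ⊆ X := by
    intro k
    induction k with
    | zero => exact subset_rfl
    | succ k ih => rw [hTsucc k]; exact (Set.inter_subset_left).trans ih
  have hTC : ∀ k l, k < l → (T l).1 ⊆ C k := by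
    intro k l hkl
    induction l with
    | zero => omega
    | succ l ih =>
      rw [hTsucc l]
      rcases Nat.lt_succ_iff_lt_or_eq.mp hkl with h | h
      · exact (Set.inter_subset_left).trans (ih h)
      · subst h; exact Set.inter_subset_right
  have hTne : ∀ k, ((T k).1 \ C k).Nonempty := fun k => (key (T k).1 (T k).2).choose_spec.2.2
  refine ⟨fun k => Subtype.val ⁻¹' ((⋂ j ∈ Finset.range k, C j) ∩ (C k)ᶜ), ?_, ?_, ?_⟩
  · intro k
    refine IsClopen.preimage ?_ continuous_subtype_val
    exact (isClopen_biInter_finset fun j _ => hCclopen j).inter (hCclopen k).compl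
  · intro k
    obtain ⟨p, hp1, hp2⟩ := hTne k
    refine ⟨⟨p, hTX k hp1⟩, ?_, hp2⟩
    simp only [Set.mem_iInter]
    intro j hj
    exact hTC j k (Finset.mem_range.mp hj) hp1
  · have main : ∀ k l, k < l →
        (Subtype.val ⁻¹' ((⋂ j ∈ Finset.range k, C j) ∩ (C k)ᶜ) : Set ↥X) ∩
        (Subtype.val ⁻¹' ((⋂ j ∈ Finset.range l, C j) ∩ (C l)ᶜ)) = ∅ := by
      intro k l hkl
      ext x
      simp only [Set.mem_inter_iff, Set.mem_preimage, Set.mem_compl_iff, Set.mem_iInter,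
        Set.mem_empty_iff_false, iff_false]
      rintro ⟨⟨_, hk2⟩, ⟨hl1, _⟩⟩
      exact hk2 (hl1 k (Finset.mem_range.mpr hkl))
    intro k l hkl
    rcases lt_or_gt_of_ne hkl with h | h
    · exact main k l h
    · rw [Set.inter_comm]; exact main l k h

end Stmt7Aux


section RowCoverSec
variable {α : Type*} [TopologicalSpace α]

private def rowCover (B D : ℕ → Set α) (n : ℕ) : Set (Set α) :=
  {V | (∃ m, {m' | B m' = B m}.Finite ∧ B m = V) ∨
       (∃ m k, {m' | B m' = B m}.Infinite ∧ n + m + 1 ≤ k ∧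
         ((({k' | (B m ∩ D k').Nonempty}.Infinite ∧ (B m ∩ D k).Nonempty) ∧ V = B m \ D k) ∨
          ((¬ {k' | (B m ∩ D k').Nonempty}.Infinite ∧ B m ∩ D k = ∅ ∧ B m ∪ D k ≠ Set.univ) ∧
            V = B m ∪ D k)))}

private lemma rowCover_decode {B D : ℕ → Set α} {n : ℕ} {V : Set α}
    (h : V ∈ rowCover B D n) :
    ∃ m k, n + 1 ≤ k ∧ (V = B m ∨ V = B m \ D k ∨ V = B m ∪ D k) := by
  rcases h with ⟨m, _, hV⟩ | ⟨m, k, _, hk, hcase⟩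
  · exact ⟨m, n + 1, le_rfl, Or.inl hV.symm⟩
  · rcases hcase with ⟨_, rfl⟩ | ⟨_, rfl⟩
    · exact ⟨m, k, by omega, Or.inr (Or.inl rfl)⟩
    · exact ⟨m, k, by omega, Or.inr (Or.inr rfl)⟩

private lemma KTau_diff_finite {𝒰 F : Set (Set α)} (h : KTau α 𝒰) (hF : F.Finite) :
    KTau α (𝒰 \ F) := by
  obtain ⟨⟨⟨hcnt, hcov, huniv⟩, hpt, hpair⟩, hclopen⟩ := h
  have hpt' : ∀ x : α, {U | U ∈ 𝒰 \ F ∧ x ∈ U}.Infinite := by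
    intro x
    refine (((hpt x).diff hF).mono ?_)
    rintro U ⟨⟨hU, hx⟩, hUF⟩
    exact ⟨⟨hU, hUF⟩, hx⟩
  refine ⟨⟨⟨hcnt.mono Set.diff_subset, ?_, fun hu => huniv hu.1⟩, hpt', ?_⟩,
    fun U hU => hclopen U hU.1⟩
  · rw [Set.sUnion_eq_univ_iff]
    intro a
    obtain ⟨U, hU1, hU2⟩ := (hpt' a).nonempty
    exact ⟨U, hU1, hU2⟩
  · intro x y
    rcases hpair x y with h | h
    · exact Or.inl (h.subset fun U hU => ⟨hU.1.1, hU.2⟩)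
    · exact Or.inr (h.subset fun U hU => ⟨hU.1.1, hU.2⟩)

private lemma rowCover_isKTau {B D : ℕ → Set α}
    (hBclopen : ∀ m, IsClopen (B m)) (hBuniv : ∀ m, B m ≠ Set.univ)
    (hL : ∀ x : α, {m | x ∈ B m}.Infinite)
    (hT : ∀ x y : α, {m | x ∈ B m ∧ y ∉ B m}.Finite ∨ {m | y ∈ B m ∧ x ∉ B m}.Finite)
    (hDclopen : ∀ k, IsClopen (D k)) (hDne : ∀ k, (D k).Nonempty)
    (hDdisj : ∀ k l, k ≠ l → D k ∩ D l = ∅) (n : ℕ) :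
    KTau α (rowCover B D n) := by
  classical
  have hDmem : ∀ (x : α) k l, x ∈ D k → x ∈ D l → k = l := by
    intro x k l hk hl
    by_contra hne
    exact absurd (show x ∈ (∅ : Set α) from (hDdisj k l hne) ▸ (show x ∈ D k ∩ D l from ⟨hk, hl⟩)) (Set.notMem_empty x)
  have hKsub : ∀ x : α, {k | x ∈ D k}.Subsingleton := fun x k hk l hl => hDmem x k l hk hl
  have pair_half : ∀ x y : α, {m | x ∈ B m ∧ y ∉ B m}.Finite →
      {U | U ∈ rowCover B D n ∧ x ∈ U ∧ y ∉ U}.Finite := by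
    intro x y hH
    have hfin : ((B '' {m | x ∈ B m ∧ y ∉ B m}) ∪
        ((⋃ k ∈ {k | y ∈ D k}, (fun m => B m \ D k) '' (Set.Iio k)) ∪
         (⋃ k ∈ {k | x ∈ D k}, (fun m => B m ∪ D k) '' (Set.Iio k)))).Finite := by
      refine (hH.image B).union (Set.Finite.union ?_ ?_)
      · exact Set.Finite.biUnion ((hKsub y).finite) fun k _ => (Set.finite_Iio k).image _
      · exact Set.Finite.biUnion ((hKsub x).finite) fun k _ => (Set.finite_Iio k).image _
    refine hfin.subset ?_
    rintro U ⟨hU, hx, hy⟩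
    rcases hU with ⟨m, _, rfl⟩ | ⟨m, k, hinf, hk, hcase⟩
    · exact Or.inl ⟨m, ⟨hx, hy⟩, rfl⟩
    · have hmk : m ∈ Set.Iio k := by simp only [Set.mem_Iio]; omega
      rcases hcase with ⟨⟨_, _⟩, rfl⟩ | ⟨⟨_, hdis, _⟩, rfl⟩
      · have hxB : x ∈ B m := hx.1
        by_cases hyB : y ∈ B m
        · have hyD : y ∈ D k := by
            by_contra hyD
            exact hy ⟨hyB, hyD⟩
          exact Or.inr (Or.inl (Set.mem_biUnion hyD ⟨m, hmk, rfl⟩))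
        · exfalso
          exact (hinf.mono fun m' hm' => by
            rw [Set.mem_setOf_eq] at hm'
            exact ⟨hm'.symm ▸ hxB, (by rw [hm']; exact hyB : y ∉ B m')⟩) hH
      · rcases hx with hxB | hxD
        · exfalso
          have hyB : y ∉ B m := fun hyB => hy (Or.inl hyB)
          exact (hinf.mono fun m' hm' => by
            rw [Set.mem_setOf_eq] at hm'
            exact ⟨hm'.symm ▸ hxB, (by rw [hm']; exact hyB : y ∉ B m')⟩) hH
        · exact Or.inr (Or.inr (Set.mem_biUnion hxD ⟨m, hmk, rfl⟩))
  have hpt : ∀ x : α, {U | U ∈ rowCover B D n ∧ x ∈ U}.Infinite := by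
    intro x
    by_cases hlight : {m | x ∈ B m ∧ {m' | B m' = B m}.Finite}.Infinite
    · refine Set.Infinite.mono ?_ (image_inf_of_fib_fin hlight fun m hm => hm.2)
      rintro U ⟨m, hm, rfl⟩
      exact ⟨Or.inl ⟨m, hm.2, rfl⟩, hm.1⟩
    · have hheavy : {m | x ∈ B m ∧ {m' | B m' = B m}.Infinite}.Infinite := by
        have hsub : {m | x ∈ B m} ⊆ {m | x ∈ B m ∧ {m' | B m' = B m}.Finite} ∪
            {m | x ∈ B m ∧ {m' | B m' = B m}.Infinite} := by
          intro m hm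
          by_cases h : {m' | B m' = B m}.Finite
          · exact Or.inl ⟨hm, h⟩
          · exact Or.inr ⟨hm, h⟩
        intro hfin
        exact (hL x) (((Set.not_infinite.mp hlight).union hfin).subset hsub)
      obtain ⟨m₀, hxm₀, hfib₀⟩ := hheavy.nonempty
      by_cases hic : {k' | (B m₀ ∩ D k').Nonempty}.Infinite
      · have hLinf : {k | n + m₀ + 1 ≤ k ∧ (B m₀ ∩ D k).Nonempty}.Infinite := by
          refine (hic.diff (Set.finite_Iio (n + m₀ + 1))).mono ?_
          rintro k ⟨hk1, hk2⟩
          simp only [Set.mem_Iio, not_lt] at hk2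
          exact ⟨hk2, hk1⟩
        have hLinf2 : ({k | n + m₀ + 1 ≤ k ∧ (B m₀ ∩ D k).Nonempty} \ {k | x ∈ D k}).Infinite :=
          hLinf.diff (hKsub x).finite
        have hinj : Set.InjOn (fun k => B m₀ \ D k)
            ({k | n + m₀ + 1 ≤ k ∧ (B m₀ ∩ D k).Nonempty} \ {k | x ∈ D k}) := by
          intro k hk l hl hkl
          by_contra hne
          obtain ⟨p, hp1, hp2⟩ := hk.1.2
          have hp3 : p ∈ B m₀ \ D l := ⟨hp1, fun hpl => hne (hDmem p k l hp2 hpl)⟩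
          have hkl' : B m₀ \ D k = B m₀ \ D l := hkl
          rw [← hkl'] at hp3
          exact hp3.2 hp2
        refine Set.Infinite.mono ?_ (hLinf2.image hinj)
        rintro U ⟨k, ⟨⟨hk1, hk2⟩, hkx⟩, rfl⟩
        exact ⟨Or.inr ⟨m₀, k, hfib₀, hk1, Or.inl ⟨⟨hic, hk2⟩, rfl⟩⟩, hxm₀, hkx⟩
      · have hsubs : {k | B m₀ ∪ D k = (Set.univ : Set α)}.Subsingleton := by
          intro k hk l hl
          obtain ⟨q, hq⟩ := Set.ne_univ_iff_exists_notMem _ |>.mp (hBuniv m₀)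
          have hqk : q ∈ D k := by
            rcases (hk ▸ (Set.mem_univ q) : q ∈ B m₀ ∪ D k) with h | h
            · exact absurd h hq
            · exact h
          have hql : q ∈ D l := by
            rcases (hl ▸ (Set.mem_univ q) : q ∈ B m₀ ∪ D l) with h | h
            · exact absurd h hq
            · exact h
          exact hDmem q k l hqk hql
        have hLinf : {k | n + m₀ + 1 ≤ k ∧ B m₀ ∩ D k = ∅ ∧ B m₀ ∪ D k ≠ (Set.univ : Set α)}.Infinite := by
          have hcfin : ((Set.Iio (n + m₀ + 1)) ∪ ({k' | (B m₀ ∩ D k').Nonempty} ∪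
              {k | B m₀ ∪ D k = (Set.univ : Set α)})).Finite :=
            (Set.finite_Iio _).union ((Set.not_infinite.mp hic).union hsubs.finite)
          refine hcfin.infinite_compl.mono ?_
          intro k hk
          simp only [Set.mem_compl_iff, Set.mem_union, Set.mem_Iio, Set.mem_setOf_eq,
            not_or, not_lt] at hk
          refine ⟨hk.1, ?_, hk.2.2⟩
          rw [← Set.not_nonempty_iff_eq_empty]
          exact hk.2.1
        have hinj : Set.InjOn (fun k => B m₀ ∪ D k)
            {k | n + m₀ + 1 ≤ k ∧ B m₀ ∩ D k = ∅ ∧ B m₀ ∪ D k ≠ Set.univ} := by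
          intro k hk l hl hkl
          by_contra hne
          obtain ⟨p, hp⟩ := hDne k
          have hpB : p ∉ B m₀ := fun hpB =>
            (Set.eq_empty_iff_forall_notMem.mp hk.2.1) p ⟨hpB, hp⟩
          have hp2 : p ∈ B m₀ ∪ D k := Or.inr hp
          have hkl' : B m₀ ∪ D k = B m₀ ∪ D l := hkl
          rw [hkl'] at hp2
          rcases hp2 with h | h
          · exact hpB h
          · exact hne (hDmem p k l hp h)
        refine Set.Infinite.mono ?_ (hLinf.image hinj)
        rintro U ⟨k, ⟨hk1, hk2, hk3⟩, rfl⟩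
        exact ⟨Or.inr ⟨m₀, k, hfib₀, hk1, Or.inr ⟨⟨hic, hk2, hk3⟩, rfl⟩⟩, Or.inl hxm₀⟩
  refine ⟨⟨⟨?_, ?_, ?_⟩, hpt, ?_⟩, ?_⟩
  · -- countable
    refine Set.Countable.mono ?_ ((Set.countable_range B).union
      ((Set.countable_range fun p : ℕ × ℕ => B p.1 \ D p.2).union
       (Set.countable_range fun p : ℕ × ℕ => B p.1 ∪ D p.2)))
    rintro U (⟨m, _, hV⟩ | ⟨m, k, _, _, (⟨_, rfl⟩ | ⟨_, rfl⟩)⟩)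
    · exact Or.inl ⟨m, hV⟩
    · exact Or.inr (Or.inl ⟨(m, k), rfl⟩)
    · exact Or.inr (Or.inr ⟨(m, k), rfl⟩)
  · -- sUnion
    rw [Set.sUnion_eq_univ_iff]
    intro a
    obtain ⟨U, hU1, hU2⟩ := (hpt a).nonempty
    exact ⟨U, hU1, hU2⟩
  · -- univ not mem
    rintro (⟨m, _, hV⟩ | ⟨m, k, _, _, (⟨_, hV⟩ | ⟨⟨_, _, hV3⟩, hV⟩)⟩)
    · exact hBuniv m hV
    · obtain ⟨p, hp⟩ := hDne k
      have : p ∈ B m \ D k := by rw [← hV]; exact Set.mem_univ p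
      exact this.2 hp
    · exact hV3 hV.symm
  · -- pair condition
    intro x y
    rcases hT x y with h | h
    · exact Or.inl (pair_half x y h)
    · exact Or.inr (pair_half y x h)
  · -- clopen
    rintro U (⟨m, _, hV⟩ | ⟨m, k, _, _, (⟨_, rfl⟩ | ⟨_, rfl⟩)⟩)
    · exact hV ▸ hBclopen m
    · exact (hBclopen m).diff (hDclopen k)
    · exact (hBclopen m).union (hDclopen k)

end RowCoverSec

/-- A space satisfies S1(C_Τ,C_Τ) iff every continuous image in `2^(ℕ×ℕ)`
which is a τ-family is τ-diagonalizable. -/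
theorem stmt7 (X : Set Cantor) (hX : X.Infinite) :
    S1 ↥X (KTau ↥X) (KTau ↥X) ↔
      ∀ Ψ : ↥X → Arr, Continuous Ψ → TauFamily (range Ψ) → TauDiag (range Ψ) := by
  classical
  have hXne : Nonempty ↥X := hX.nonempty.to_subtype
  constructor
  · -- forward direction
    intro hS1 Ψ hcont hfam
    set BB : ℕ → ℕ → Set ↥X := fun n m => {x | Ψ x (n, m) = true} with hBBdef
    have hBBclopen : ∀ n m, IsClopen (BB n m) := by
      intro n m
      have hc : Continuous fun x : ↥X => Ψ x (n, m) := (continuous_apply (n, m)).comp hcont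
      exact (isClopen_discrete {true}).preimage hc
    have hrowL : ∀ (x : ↥X) n, {m | x ∈ BB n m}.Infinite := by
      intro x n
      have h := hfam.1 (Ψ x) ⟨x, rfl⟩ n
      rw [freq_iff_inf] at h
      exact h
    have hrowT : ∀ (x y : ↥X) n, {m | x ∈ BB n m ∧ y ∉ BB n m}.Finite ∨
        {m | y ∈ BB n m ∧ x ∉ BB n m}.Finite := by
      intro x y n
      have hset : ∀ u v : ↥X, {m | ¬ (Ψ u (n, m) ≤ Ψ v (n, m))} =
          {m | u ∈ BB n m ∧ v ∉ BB n m} := by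
        intro u v
        ext m
        simp only [Set.mem_setOf_eq, bool_not_le, hBBdef, Bool.not_eq_true]
      rcases hfam.2 (Ψ x) ⟨x, rfl⟩ (Ψ y) ⟨y, rfl⟩ n with h | h
      · rw [ev_iff_fin, hset] at h
        exact Or.inl h
      · rw [ev_iff_fin, hset] at h
        exact Or.inr h
    by_cases hNS : {n | ¬ ∃ m, BB n m = Set.univ}.Infinite
    · -- main case: infinitely many non-trivial rows
      obtain ⟨D, hDclopen, hDne, hDdisj⟩ := exists_markers X hX
      have hNS' : (setOf fun n => ¬ ∃ m, BB n m = Set.univ).Infinite := hNS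
      set NSp : ℕ → Prop := fun n => ¬ ∃ m, BB n m = Set.univ with hNSdef
      set r : ℕ → ℕ := Nat.nth NSp with hrdef
      have hrNS : ∀ i, NSp (r i) := fun i => Nat.nth_mem_of_infinite hNS' i
      have hrmono : StrictMono r := Nat.nth_strictMono hNS'
      have hri : ∀ i, i ≤ r i := fun i => hrmono.le_apply
      have hBuniv : ∀ n, NSp n → ∀ m, BB n m ≠ Set.univ := fun n hn m hm => hn ⟨m, hm⟩
      have hWW : ∀ i, KTau ↥X (rowCover (BB (r i)) D (r i)) := fun i =>
        rowCover_isKTau (hBBclopen (r i)) (hBuniv (r i) (hrNS i)) (fun x => hrowL x (r i))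
          (fun x y => hrowT x y (r i)) hDclopen hDne hDdisj (r i)
      have hUcnt : (⋃ i, rowCover (BB (r i)) D (r i)).Countable :=
        Set.countable_iUnion fun i => (hWW i).1.1.1
      have hUne : (⋃ i, rowCover (BB (r i)) D (r i)).Nonempty := by
        obtain ⟨x0⟩ := hXne
        obtain ⟨U, hU1, _⟩ := ((hWW 0).1.2.1 x0).nonempty
        exact ⟨U, Set.mem_iUnion.mpr ⟨0, hU1⟩⟩
      obtain ⟨Sen, hSen⟩ := hUcnt.exists_eq_range hUne
      have hCC : ∀ i, KTau ↥X ((rowCover (BB (r i)) D (r i)) \ (Sen '' (Set.Iic i))) :=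
        fun i => KTau_diff_finite (hWW i) ((Set.finite_Iic i).image Sen)
      obtain ⟨V, hV1, hV2⟩ :=
        hS1 (fun i => (rowCover (BB (r i)) D (r i)) \ (Sen '' (Set.Iic i))) hCC
      have hVmem : ∀ i, V i ∈ rowCover (BB (r i)) D (r i) := fun i => (hV1 i).1
      have hVfib : ∀ U : Set ↥X, {i | V i = U}.Finite := by
        intro U
        by_cases hU : U ∈ ⋃ i, rowCover (BB (r i)) D (r i)
        · rw [hSen] at hU
          obtain ⟨j, rfl⟩ := hU
          refine (Set.finite_Iio j).subset ?_
          intro i hi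
          rw [Set.mem_setOf_eq] at hi
          rw [Set.mem_Iio]
          by_contra hij
          push_neg at hij
          exact (hV1 i).2 (hi.symm ▸ (⟨j, Set.mem_Iic.mpr hij, rfl⟩ :
            Sen j ∈ Sen '' (Set.Iic i)))
        · refine Set.finite_empty.subset ?_
          intro i hi
          rw [Set.mem_setOf_eq] at hi
          exact absurd (Set.mem_iUnion.mpr ⟨i, hVmem i⟩) (hi ▸ hU)
      have hdec : ∀ i, ∃ m k, r i + 1 ≤ k ∧
          (V i = BB (r i) m ∨ V i = BB (r i) m \ D k ∨ V i = BB (r i) m ∪ D k) := fun i =>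
        rowCover_decode (hVmem i)
      choose mf kf hkf hVrel using hdec
      set g : ℕ → ℕ := fun n => if h : ∃ m, BB n m = Set.univ then h.choose
        else mf (Nat.count NSp n) with hgdef
      have hgr : ∀ i, g (r i) = mf i := by
        intro i
        simp only [hgdef]
        rw [dif_neg (hrNS i), Nat.count_nth_of_infinite hNS' i]
      have hE : ∀ x : ↥X, {i | x ∈ D (kf i)}.Finite := by
        intro x
        rcases Set.eq_empty_or_nonempty {i | x ∈ D (kf i)} with h | ⟨i0, hi0⟩
        · rw [h]; exact Set.finite_empty
        · refine (Set.finite_Iic (kf i0)).subset ?_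
          intro i hi
          rw [Set.mem_setOf_eq] at hi hi0
          have hkk : kf i = kf i0 := by
            by_contra hne
            exact absurd (show x ∈ (∅ : Set ↥X) from (hDdisj _ _ hne) ▸ (show x ∈ D (kf i) ∩ D (kf i0) from ⟨hi, hi0⟩))
              (Set.notMem_empty x)
          have h2 : i + 1 ≤ kf i := le_trans (Nat.succ_le_succ (hri i)) (hkf i)
          rw [Set.mem_Iic]
          omega
      have hrel : ∀ i (x : ↥X), x ∉ D (kf i) → (x ∈ V i ↔ x ∈ BB (r i) (mf i)) := by
        intro i x hx
        rcases hVrel i with h | h | h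
        · rw [h]
        · rw [h]
          exact ⟨fun hh => hh.1, fun hh => ⟨hh, hx⟩⟩
        · rw [h]
          constructor
          · rintro (hh | hh)
            · exact hh
            · exact absurd hh hx
          · exact fun hh => Or.inl hh
      refine ⟨g, ?_, ?_⟩
      · rintro A ⟨x, rfl⟩
        rw [freq_iff_inf]
        have h1 : {i | x ∈ V i}.Infinite := by
          intro hfin
          refine (hV2.1.2.1 x) ?_
          refine (hfin.image V).subset ?_
          rintro U ⟨⟨i, rfl⟩, hx⟩
          exact ⟨i, hx, rfl⟩
        have h2 : ({i | x ∈ V i} \ {i | x ∈ D (kf i)}).Infinite := h1.diff (hE x)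
        refine Set.Infinite.mono ?_ (h2.image hrmono.injective.injOn)
        rintro nn ⟨i, ⟨hxV, hxD⟩, rfl⟩
        rw [Set.mem_setOf_eq, hgr i]
        exact (hrel i x hxD).mp hxV
      · have main : ∀ u v : ↥X, {U | U ∈ range V ∧ u ∈ U ∧ v ∉ U}.Finite →
            ∀ᶠ nn in atTop, Ψ u (nn, g nn) ≤ Ψ v (nn, g nn) := by
          intro u v hfin
          rw [ev_iff_fin]
          have hIbad : {i | u ∈ V i ∧ v ∉ V i}.Finite := by
            refine (Set.Finite.biUnion hfin fun U _ => hVfib U).subset ?_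
            intro i hi
            exact Set.mem_biUnion ⟨⟨i, rfl⟩, hi.1, hi.2⟩ rfl
          refine ((((hIbad.union (hE u)).union (hE v)).image r)).subset ?_
          intro nn hnn
          rw [Set.mem_setOf_eq, bool_not_le] at hnn
          have huB : u ∈ BB nn (g nn) := hnn.1
          have hvB : v ∉ BB nn (g nn) := by
            intro hv
            have hv' : Ψ v (nn, g nn) = true := hv
            rw [hnn.2] at hv'
            exact Bool.false_ne_true hv'
          have hnNS : NSp nn := by
            intro hsafe
            apply hvB
            have hspec : BB nn (g nn) = Set.univ := by
              simp only [hgdef]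
              rw [dif_pos hsafe]
              exact hsafe.choose_spec
            rw [hspec]
            exact Set.mem_univ v
          have hnr : r (Nat.count NSp nn) = nn := Nat.nth_count hnNS
          refine ⟨Nat.count NSp nn, ?_, hnr⟩
          rw [← hnr, hgr (Nat.count NSp nn)] at huB hvB
          by_cases hu : u ∈ D (kf (Nat.count NSp nn))
          · exact Or.inl (Or.inr hu)
          by_cases hv : v ∈ D (kf (Nat.count NSp nn))
          · exact Or.inr hv
          exact Or.inl (Or.inl ⟨(hrel _ u hu).mpr huB,
            fun hvV => hvB ((hrel _ v hv).mp hvV)⟩)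
        rintro A ⟨x, rfl⟩ B' ⟨y, rfl⟩
        rcases hV2.1.2.2 x y with h | h
        · exact Or.inl (main x y h)
        · exact Or.inr (main y x h)
    · -- easy case: cofinitely many rows have a full column
      set g : ℕ → ℕ := fun n => if h : ∃ m, BB n m = Set.univ then h.choose else 0 with hgdef
      have hgsafe : ∀ n, (∃ m, BB n m = Set.univ) → BB n (g n) = Set.univ := by
        intro n h
        simp only [hgdef]
        rw [dif_pos h]
        exact h.choose_spec
      refine ⟨g, ?_, ?_⟩
      · rintro A ⟨x, rfl⟩
        rw [freq_iff_inf]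
        refine ((Set.not_infinite.mp hNS).infinite_compl).mono ?_
        intro n hn
        rw [Set.mem_compl_iff, Set.mem_setOf_eq, not_not] at hn
        show x ∈ BB n (g n)
        rw [hgsafe n hn]
        exact Set.mem_univ x
      · rintro A ⟨x, rfl⟩ B' ⟨y, rfl⟩
        left
        rw [ev_iff_fin]
        refine (Set.not_infinite.mp hNS).subset ?_
        intro n hn
        rw [Set.mem_setOf_eq] at hn
        rw [Set.mem_setOf_eq]
        intro hsafe
        apply hn
        have hy : y ∈ BB n (g n) := by
          rw [hgsafe n hsafe]
          exact Set.mem_univ y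
        have hy' : Ψ y (n, g n) = true := hy
        rw [hy']
        exact Bool.le_true _
  · -- backward direction
    intro hDiag Ucov hUcov
    obtain ⟨x0⟩ := hXne
    have hUcnt : (⋃ n, Ucov n).Countable := Set.countable_iUnion fun n => (hUcov n).1.1.1
    have hUinf : (⋃ n, Ucov n).Infinite := by
      refine Set.Infinite.mono (Set.subset_iUnion Ucov 0) ?_
      exact ((hUcov 0).1.2.1 x0).mono fun U hU => hU.1
    haveI hc1 : Countable ↥(⋃ n, Ucov n) := hUcnt.to_subtype
    haveI hc2 : Encodable ↥(⋃ n, Ucov n) := Encodable.ofCountable _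
    haveI hc3 : Infinite ↥(⋃ n, Ucov n) := hUinf.to_subtype
    haveI hc4 : Denumerable ↥(⋃ n, Ucov n) := Denumerable.ofEncodableOfInfinite _
    set e : ↥(⋃ n, Ucov n) ≃ ℕ := Denumerable.eqv _ with hedef
    set W : ℕ → Set ↥X := fun k => ((e.symm k : ↥(⋃ n, Ucov n)) : Set ↥X) with hWdef
    have hWinj : Function.Injective W := fun k l h =>
      e.symm.injective (Subtype.coe_injective h)
    have hWmem : ∀ k, W k ∈ ⋃ n, Ucov n := fun k => (e.symm k).2
    have hWsurj : ∀ U ∈ ⋃ n, Ucov n, ∃ k, W k = U := by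
      intro U hU
      refine ⟨e ⟨U, hU⟩, ?_⟩
      simp only [hWdef, Equiv.symm_apply_apply]
    have hWclopen : ∀ k, IsClopen (W k) := by
      intro k
      obtain ⟨n, hn⟩ := Set.mem_iUnion.mp (hWmem k)
      exact (hUcov n).2 _ hn
    have hMinf : ∀ n, {k | n ≤ k ∧ W k ∈ Ucov n}.Infinite := by
      intro n
      have hUn : (Ucov n).Infinite := ((hUcov n).1.2.1 x0).mono fun U hU => hU.1
      have hsub : Ucov n ⊆ range W := by
        intro U hU
        obtain ⟨k, hk⟩ := hWsurj U (Set.mem_iUnion.mpr ⟨n, hU⟩)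
        exact ⟨k, hk⟩
      have hpre : (W ⁻¹' Ucov n).Infinite := hUn.preimage hsub
      refine (hpre.diff (Set.finite_Iio n)).mono ?_
      rintro k ⟨hk1, hk2⟩
      rw [Set.mem_Iio, not_lt] at hk2
      exact ⟨hk2, hk1⟩
    set s : ℕ → ℕ → ℕ := fun n => Nat.nth (fun k => n ≤ k ∧ W k ∈ Ucov n) with hsdef
    have hs_mem : ∀ n m, n ≤ s n m ∧ W (s n m) ∈ Ucov n := fun n m =>
      Nat.nth_mem_of_infinite (hMinf n) m
    have hs_mono : ∀ n, StrictMono (s n) := fun n => Nat.nth_strictMono (hMinf n)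
    have hs_surj : ∀ n k, n ≤ k → W k ∈ Ucov n → ∃ m, s n m = k := fun n k h1 h2 =>
      ⟨Nat.count _ k, Nat.nth_count ⟨h1, h2⟩⟩
    set Ψ : ↥X → Arr := fun x p => if x ∈ W (s p.1 p.2) then true else false with hΨdef
    have hmem : ∀ (x : ↥X) (p : ℕ × ℕ), Ψ x p = true ↔ x ∈ W (s p.1 p.2) := by
      intro x p
      simp only [hΨdef]
      exact ite_bool_iff
    have hcont : Continuous Ψ := continuous_pi fun p => indicator_cont (hWclopen (s p.1 p.2))
    have hfam : TauFamily (range Ψ) := by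
      constructor
      · rintro A ⟨x, rfl⟩ n
        rw [freq_iff_inf]
        have base : {U | U ∈ Ucov n ∧ x ∈ U}.Infinite := (hUcov n).1.2.1 x
        have hsub : {U | U ∈ Ucov n ∧ x ∈ U} ⊆ range W := by
          intro U hU
          obtain ⟨k, hk⟩ := hWsurj U (Set.mem_iUnion.mpr ⟨n, hU.1⟩)
          exact ⟨k, hk⟩
        have h2 : ((W ⁻¹' {U | U ∈ Ucov n ∧ x ∈ U}) \ Set.Iio n).Infinite :=
          (base.preimage hsub).diff (Set.finite_Iio n)
        intro hfin
        apply h2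
        refine (hfin.image (s n)).subset ?_
        rintro k ⟨hk1, hk2⟩
        rw [Set.mem_preimage, Set.mem_setOf_eq] at hk1
        rw [Set.mem_Iio, not_lt] at hk2
        obtain ⟨m, rfl⟩ := hs_surj n k hk2 hk1.1
        exact ⟨m, (hmem x (n, m)).mpr hk1.2, rfl⟩
      · rintro A ⟨x, rfl⟩ B' ⟨y, rfl⟩ n
        have key : ∀ u v : ↥X, {U | U ∈ Ucov n ∧ u ∈ U ∧ v ∉ U}.Finite →
            ∀ᶠ m in atTop, Ψ u (n, m) ≤ Ψ v (n, m) := by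
          intro u v h
          rw [ev_iff_fin]
          have hinj : Function.Injective fun m => W (s n m) :=
            hWinj.comp (hs_mono n).injective
          refine (Set.Finite.preimage hinj.injOn h).subset ?_
          intro m hm
          rw [Set.mem_setOf_eq, bool_not_le] at hm
          have hu : u ∈ W (s n m) := (hmem u (n, m)).mp hm.1
          have hv : v ∉ W (s n m) := by
            intro hv
            have hv' : Ψ v (n, m) = true := (hmem v (n, m)).mpr hv
            rw [hm.2] at hv'
            exact Bool.false_ne_true hv'
          exact ⟨(hs_mem n m).2, hu, hv⟩
        rcases (hUcov n).1.2.2 x y with h | h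
        · exact Or.inl (key x y h)
        · exact Or.inr (key y x h)
    obtain ⟨g, hg1, hg2⟩ := hDiag Ψ hcont hfam
    have hVc_mem : ∀ n, W (s n (g n)) ∈ Ucov n := fun n => (hs_mem n (g n)).2
    refine ⟨fun n => W (s n (g n)), hVc_mem, ?_⟩
    have hpt : ∀ x : ↥X, {U | U ∈ range (fun n => W (s n (g n))) ∧ x ∈ U}.Infinite := by
      intro x
      have hS : {n | Ψ x (n, g n) = true}.Infinite := by
        rw [← freq_iff_inf]
        exact hg1 (Ψ x) ⟨x, rfl⟩
      intro hfin
      apply hS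
      have hjfin : (W ⁻¹' {U | U ∈ range (fun n => W (s n (g n))) ∧ x ∈ U}).Finite :=
        hfin.preimage hWinj.injOn
      refine (hjfin.biUnion fun k _ => Set.finite_Iic k).subset ?_
      intro n hn
      rw [Set.mem_setOf_eq] at hn
      have hx : x ∈ W (s n (g n)) := (hmem x (n, g n)).mp hn
      refine Set.mem_biUnion (show s n (g n) ∈ _ from ?_) (Set.mem_Iic.mpr (hs_mem n (g n)).1)
      rw [Set.mem_preimage]
      exact ⟨⟨n, rfl⟩, hx⟩
    refine ⟨⟨⟨?_, ?_, ?_⟩, hpt, ?_⟩, ?_⟩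
    · exact Set.countable_range _
    · rw [Set.sUnion_eq_univ_iff]
      intro a
      obtain ⟨U, hU1, hU2⟩ := (hpt a).nonempty
      exact ⟨U, hU1, hU2⟩
    · rintro ⟨n, hn⟩
      exact (hUcov n).1.1.2.2 (hn ▸ hVc_mem n)
    · intro x y
      have key : ∀ u v : ↥X, (∀ᶠ n in atTop, Ψ u (n, g n) ≤ Ψ v (n, g n)) →
          {U | U ∈ range (fun n => W (s n (g n))) ∧ u ∈ U ∧ v ∉ U}.Finite := by
        intro u v h
        rw [ev_iff_fin] at h
        refine (h.image (fun n => W (s n (g n)))).subset ?_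
        rintro U ⟨⟨n, rfl⟩, hu, hv⟩
        refine ⟨n, ?_, rfl⟩
        rw [Set.mem_setOf_eq, bool_not_le]
        refine ⟨(hmem u (n, g n)).mpr hu, ?_⟩
        have := fun hv' => hv ((hmem v (n, g n)).mp hv')
        cases hvv : Ψ v (n, g n)
        · rfl
        · exact absurd hvv this
      rcases hg2 (Ψ x) ⟨x, rfl⟩ (Ψ y) ⟨y, rfl⟩ with h | h
      · exact Or.inl (key x y h)
      · exact Or.inr (key y x h)
    · rintro U ⟨n, rfl⟩
      exact hWclopen (s n (g n))

end
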